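/- For $2 \le k \le t$ and all $n \ge 1$, $\phi^{*,k}(t,n) \ge \lceil (t-k+1)n/t \rceil$; moreover for $k = 2$, $\phi^{*,2}(t,n) = \lceil (t-1)n/t \rceil$. -/

import Mathlib

open Finset
open scoped Classical

/-- A set of vertices of the `t`-partite vertex set `Fin t × Fin n` is legal if it
meets each class in at most one vertex. -/
def Legal {t n : ℕ} (S : Finset (Fin t × Fin n)) : Prop :=
  ∀ u ∈ S, ∀ v ∈ S, u.1 = v.1 → u = v

/-- `H` is a `t`-partite `k`-uniform hypergraph with classes of size `n`. -/
def IsPartiteKGraph (t n k : ℕ) (H : Finset (Finset (Fin t × Fin n))) : Prop :=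
  ∀ e ∈ H, e.card = k ∧ Legal e

/-- The minimum partite codegree of `H` is at least `d`. -/
def CodegGE (t n k : ℕ) (H : Finset (Finset (Fin t × Fin n))) (d : ℝ) : Prop :=
  ∀ T : Finset (Fin t × Fin n), T.card = k - 1 → Legal T →
    ∀ j : Fin t, (∀ v ∈ T, v.1 ≠ j) →
      d ≤ ((Finset.univ.filter (fun x : Fin n => insert (j, x) T ∈ H)).card : ℝ)

/-- `S` spans a copy of the complete `k`-graph `K_t^k` in `H` (one vertex per class). -/
def SpansClique (t n k : ℕ) (H : Finset (Finset (Fin t × Fin n)))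
    (S : Finset (Fin t × Fin n)) : Prop :=
  S.card = t ∧ Legal S ∧ ∀ e ⊆ S, e.card = k → e ∈ H

/-- `M` is a perfect `K_t^k`-matching in `H`. -/
def IsPerfectKtMatching (t n k : ℕ) (H M : Finset (Finset (Fin t × Fin n))) : Prop :=
  (∀ S ∈ M, SpansClique t n k H S) ∧
  (M : Set (Finset (Fin t × Fin n))).PairwiseDisjoint id ∧
  ∀ v : Fin t × Fin n, ∃ S ∈ M, v ∈ S

/-- `w` is a perfect fractional `K_t^k`-matching of `H`. -/
def IsPerfectFracMatching (t n k : ℕ) (H : Finset (Finset (Fin t × Fin n)))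
    (w : Finset (Fin t × Fin n) → ℝ) : Prop :=
  (∀ S, 0 ≤ w S ∧ w S ≤ 1) ∧
  (∀ S, w S ≠ 0 → SpansClique t n k H S) ∧
  (∀ v : Fin t × Fin n, ∑ S ∈ Finset.univ.filter (fun S => v ∈ S), w S ≤ 1) ∧
  ∑ S : Finset (Fin t × Fin n), w S = (n : ℝ)

/-- The natural-number version of the partite codegree condition. -/
def CodegGEN (t n k : ℕ) (H : Finset (Finset (Fin t × Fin n))) (d : ℕ) : Prop :=
  ∀ T : Finset (Fin t × Fin n), T.card = k - 1 → Legal T →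
    ∀ j : Fin t, (∀ v ∈ T, v.1 ≠ j) →
      d ≤ (Finset.univ.filter (fun x : Fin n => insert (j, x) T ∈ H)).card

/-- `φ^{*,k}(t,n)`: the smallest integer `d` such that every balanced `t`-partite
`k`-graph with classes of size `n` and minimum partite codegree at least `d` has a
perfect fractional `K_t^k`-matching. -/
noncomputable def phiStar (t k n : ℕ) : ℕ :=
  sInf {d : ℕ | ∀ H : Finset (Finset (Fin t × Fin n)), IsPartiteKGraph t n k H →
    CodegGEN t n k H d → ∃ w, IsPerfectFracMatching t n k H w}


theorem floorQ (m n : ℕ) : (⌊(m : ℚ) / n⌋ : ℤ) = (m / n : ℕ) := by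
  have h := Nat.floor_div_eq_div (K := ℚ) m n
  have h0 : (0 :ℚ) ≤ (m:ℚ)/n := by positivity
  rw [← Int.floor_toNat] at h
  have := Int.floor_nonneg.2 h0
  omega
theorem ceilEq (t k n : ℕ) (hk : 2 ≤ k) (hkt : k ≤ t) :
    ⌈(((t : ℚ) - k + 1) * n) / t⌉ = (n : ℤ) - ((k-1) * n / t : ℕ) := by
  have ht : (0:ℚ) < t := by have : 0 < t := by omega
                            exact_mod_cast this
  have hkq : ((k:ℚ) - 1) = ((k-1 : ℕ) : ℚ) := by
    have : 1 ≤ k := by omega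
    push_cast [this]; ring
  have : (((t : ℚ) - k + 1) * n) / t = (- ((((k-1 : ℕ))*n : ℕ) : ℚ) / t) + ((n:ℤ) : ℚ) := by
    field_simp
    push_cast [← hkq]
    ring
  rw [this, Int.ceil_add_intCast, neg_div, Int.ceil_neg, floorQ]
  ring

lemma legal_subset {t n : ℕ} {S e : Finset (Fin t × Fin n)} (hS : Legal S) (h : e ⊆ S) :
    Legal e := fun u hu v hv h1 => hS u (h hu) v (h hv) h1

lemma legal_insert {t n : ℕ} {T : Finset (Fin t × Fin n)} (hT : Legal T) (j : Fin t)
    (hj : ∀ v ∈ T, v.1 ≠ j) (x : Fin n) : Legal (insert (j, x) T) := by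
  intro u hu v hv h1
  rcases Finset.mem_insert.1 hu with rfl | hu <;> rcases Finset.mem_insert.1 hv with rfl | hv
  · rfl
  · exact absurd h1.symm (hj v hv)
  · exact absurd h1 (hj u hu)
  · exact hT u hu v hv h1

lemma notmem_of_avoid {t n : ℕ} {T : Finset (Fin t × Fin n)} {j : Fin t}
    (hj : ∀ v ∈ T, v.1 ≠ j) (x : Fin n) : (j, x) ∉ T := fun h => hj _ h rfl

/-- The extremal construction: no perfect fractional matching at codegree `n - a`. -/
lemma lowerConstruction (t k n : ℕ) (hk : 2 ≤ k) (hkt : k ≤ t) (hn : 1 ≤ n) :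
    ¬ (∀ H : Finset (Finset (Fin t × Fin n)), IsPartiteKGraph t n k H →
      CodegGEN t n k H (n - ((k-1)*n/t + 1)) → ∃ w, IsPerfectFracMatching t n k H w) := by
  intro hyp
  have ht : 0 < t := by omega
  set q : ℕ := (k-1)*n/t with hq
  set a : ℕ := q + 1 with ha
  have hqn : q < n := by
    rw [hq, Nat.div_lt_iff_lt_mul ht]
    have : (k-1) < t := by omega
    calc (k-1)*n < t*n := by
          apply Nat.mul_lt_mul_of_lt_of_le this (le_refl n) (by omega)
    _ = n * t := Nat.mul_comm _ _
  have han : a ≤ n := by omega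
  set H : Finset (Finset (Fin t × Fin n)) :=
    univ.filter (fun e => e.card = k ∧ Legal e ∧ ∃ v ∈ e, a ≤ (v.2 : ℕ)) with hH
  have hPart : IsPartiteKGraph t n k H := by
    intro e he
    rw [hH, mem_filter] at he
    exact ⟨he.2.1, he.2.2.1⟩
  have hcard_ge : (univ.filter (fun x : Fin n => a ≤ (x : ℕ))).card = n - a := by
    have : (univ.filter (fun x : Fin n => a ≤ (x : ℕ))) =
        (univ.filter (fun x : Fin n => ¬ ((x : ℕ) < a))) := by
      apply filter_congr; intro x _; simp [Nat.not_lt]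
    rw [this, Finset.filter_not, Finset.card_sdiff_of_subset (Finset.filter_subset _ _)]
    have hcount : #(filter (fun x : Fin n => ↑x < a) univ) = a := by
      rw [← Finset.card_range a]
      apply Finset.card_bij (fun (x : Fin n) _ => (x : ℕ)) ?_ ?_ ?_
      · intro x hx
        simp only [mem_filter] at hx
        simpa using hx.2
      · intro x _ y _ h; exact Fin.val_injective h
      · intro b hb
        simp only [Finset.mem_range] at hb
        exact ⟨⟨b, lt_of_lt_of_le hb han⟩, by simp [hb], rfl⟩
    rw [hcount]
    simp
  have hCod : CodegGEN t n k H (n - a) := by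
    intro T hTcard hTleg j hj
    have hmemH : ∀ x : Fin n, (∃ v ∈ insert (j,x) T, a ≤ (v.2 : ℕ)) → insert (j, x) T ∈ H := by
      intro x hex
      rw [hH, mem_filter]
      refine ⟨mem_univ _, ?_, legal_insert hTleg j hj x, hex⟩
      rw [Finset.card_insert_of_notMem (notmem_of_avoid hj x), hTcard]
      omega
    by_cases hT : ∃ v ∈ T, a ≤ (v.2 : ℕ)
    · obtain ⟨v, hv, hva⟩ := hT
      have : (univ.filter (fun x : Fin n => insert (j, x) T ∈ H)) = univ := by
        apply Finset.eq_univ_of_forall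
        intro x
        simp only [mem_filter, mem_univ, true_and]
        exact hmemH x ⟨v, Finset.mem_insert_of_mem hv, hva⟩
      rw [this]
      simpa using Nat.sub_le n a
    · refine le_trans ?_ (Finset.card_le_card (?_ :
        (univ.filter (fun x : Fin n => a ≤ (x : ℕ))) ⊆ _))
      · rw [hcard_ge]
      · intro x hx
        simp only [mem_filter, mem_univ, true_and] at hx ⊢
        exact hmemH x ⟨(j,x), Finset.mem_insert_self _ _, hx⟩
  obtain ⟨w, hw1, hw2, hw3, hw4⟩ := hyp H hPart hCod
  -- coverage function
  set cov : Fin t × Fin n → ℝ := fun v => ∑ S ∈ univ.filter (fun S => v ∈ S), w S with hcov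
  have hswap : ∀ (A : Finset (Fin t × Fin n)), ∑ v ∈ A, cov v = ∑ S : Finset (Fin t × Fin n), w S * ((S ∩ A).card : ℝ) := by
    intro A
    rw [hcov]
    simp only [Finset.sum_filter]
    rw [Finset.sum_comm]
    apply Finset.sum_congr rfl
    intro S _
    rw [Finset.sum_ite_mem, Finset.sum_const, Finset.inter_comm]
    simp [mul_comm]
  set A : Finset (Fin t × Fin n) := univ.filter (fun v : Fin t × Fin n => (v.2 : ℕ) < a) with hA
  have hAcard : A.card = t * a := by
    have : A = (univ : Finset (Fin t)) ×ˢ (univ.filter (fun x : Fin n => (x : ℕ) < a)) := by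
      ext ⟨j, x⟩
      simp [hA, Finset.mem_product]
    rw [this, Finset.card_product]
    congr 1
    · simp
    · rw [← Finset.card_range a]
      apply Finset.card_bij (fun (x : Fin n) _ => (x : ℕ)) ?_ ?_ ?_
      · intro x hx
        simp only [mem_filter] at hx
        simpa using hx.2
      · intro x _ y _ h; exact Fin.val_injective h
      · intro b hb
        simp only [Finset.mem_range] at hb
        exact ⟨⟨b, lt_of_lt_of_le hb han⟩, by simp [hb], rfl⟩
  have hsum_all : ∑ S : Finset (Fin t × Fin n), w S * ((S.card : ℕ) : ℝ) = (t : ℝ) * n := by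
    have : ∀ S : Finset (Fin t × Fin n), w S * ((S.card : ℕ) : ℝ) = w S * t := by
      intro S
      by_cases h : w S = 0
      · rw [h]; ring
      · rw [(hw2 S h).1]
    rw [Finset.sum_congr rfl (fun S _ => this S), ← Finset.sum_mul, hw4]
    ring
  have htot : ∑ v : Fin t × Fin n, cov v = (t : ℝ) * n := by
    rw [hswap univ]
    simp only [Finset.inter_univ]
    exact hsum_all
  have hcov1 : ∀ v : Fin t × Fin n, cov v = 1 := by
    by_contra hcon
    push_neg at hcon
    obtain ⟨v0, hv0⟩ := hcon
    have hlt : cov v0 < 1 := lt_of_le_of_ne (hw3 v0) hv0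
    have : ∑ v : Fin t × Fin n, cov v < ∑ v : Fin t × Fin n, (1 : ℝ) := by
      apply Finset.sum_lt_sum (fun v _ => hw3 v) ⟨v0, mem_univ _, hlt⟩
    have h2 : ∑ _v : Fin t × Fin n, (1:ℝ) = (t:ℝ)*n := by
      simp [Finset.card_univ, Fintype.card_prod]
    rw [htot, h2] at this
    exact lt_irrefl _ this
  have hineq : ((t * a : ℕ) : ℝ) ≤ ((n * (k-1) : ℕ) : ℝ) := by
    have h1 : ∑ v ∈ A, cov v = ((t * a : ℕ) : ℝ) := by
      rw [Finset.sum_congr rfl (fun v _ => hcov1 v), Finset.sum_const, hAcard]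
      simp
    have h2 : ∑ S : Finset (Fin t × Fin n), w S * (((S ∩ A).card : ℕ) : ℝ) ≤ ((n * (k-1) : ℕ) : ℝ) := by
      have hPer : ∀ S : Finset (Fin t × Fin n), w S * (((S ∩ A).card : ℕ) : ℝ) ≤ w S * ((k : ℝ) - 1) := by
        intro S
        by_cases h : w S = 0
        · rw [h]; simp
        · apply mul_le_mul_of_nonneg_left ?_ (hw1 S).1
          have hle : (S ∩ A).card ≤ k - 1 := by
            by_contra hgt
            push_neg at hgt
            have hk0 : k ≤ (S ∩ A).card := by omega
            obtain ⟨e, he, hecard⟩ := Finset.exists_subset_card_eq hk0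
            have heS : e ⊆ S := he.trans (Finset.inter_subset_left)
            have heH : e ∈ H := (hw2 S h).2.2 e heS hecard
            rw [hH, mem_filter] at heH
            obtain ⟨v, hv, hva⟩ := heH.2.2.2
            have : v ∈ A := (he.trans Finset.inter_subset_right) hv
            rw [hA, mem_filter] at this
            omega
          calc (((S ∩ A).card : ℕ) : ℝ) ≤ ((k - 1 : ℕ) : ℝ) := by exact_mod_cast hle
          _ = (k : ℝ) - 1 := by
              have : 1 ≤ k := by omega
              push_cast [this]; ring
      calc ∑ S : Finset (Fin t × Fin n), w S * (((S ∩ A).card : ℕ) : ℝ)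
          ≤ ∑ S : Finset (Fin t × Fin n), w S * ((k : ℝ) - 1) := Finset.sum_le_sum (fun S _ => hPer S)
        _ = (∑ S : Finset (Fin t × Fin n), w S) * ((k : ℝ) - 1) := by rw [Finset.sum_mul]
        _ = ((n * (k-1) : ℕ) : ℝ) := by
            rw [hw4]
            have : 1 ≤ k := by omega
            push_cast [this]; ring
    calc ((t * a : ℕ) : ℝ) = ∑ v ∈ A, cov v := h1.symm
      _ = ∑ S : Finset (Fin t × Fin n), w S * (((S ∩ A).card : ℕ) : ℝ) := hswap A
      _ ≤ _ := h2
  have hineqN : t * a ≤ n * (k-1) := by exact_mod_cast hineq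
  have hlt2 : (k-1) * n < a * t := (Nat.div_lt_iff_lt_mul ht).1 (by omega)
  rw [Nat.mul_comm a t] at hlt2
  rw [Nat.mul_comm n (k-1)] at hineqN
  omega

lemma n_mem (t k n : ℕ) (hk : 2 ≤ k) (hkt : k ≤ t) (hn : 1 ≤ n) :
    ∀ H : Finset (Finset (Fin t × Fin n)), IsPartiteKGraph t n k H →
      CodegGEN t n k H n → ∃ w, IsPerfectFracMatching t n k H w := by
  intro H _ hCod
  have ht : 0 < t := by omega
  -- every legal k-set is an edge
  have hAll : ∀ e : Finset (Fin t × Fin n), Legal e → e.card = k → e ∈ H := by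
    intro e hleg hcard
    have hne : e.Nonempty := Finset.card_pos.1 (by omega)
    obtain ⟨v, hv⟩ := hne
    have hT : (e.erase v).card = k - 1 := by rw [Finset.card_erase_of_mem hv, hcard]
    have hTleg : Legal (e.erase v) := legal_subset hleg (Finset.erase_subset _ _)
    have havoid : ∀ u ∈ e.erase v, u.1 ≠ v.1 := by
      intro u hu h1
      exact (Finset.ne_of_mem_erase hu) (hleg u (Finset.mem_of_mem_erase hu) v hv h1)
    have hge := hCod (e.erase v) hT hTleg v.1 havoid
    have huniv : (univ.filter (fun x : Fin n => insert (v.1, x) (e.erase v) ∈ H)) = univ := by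
      apply Finset.eq_univ_of_card
      have hle := Finset.card_filter_le (univ : Finset (Fin n))
        (fun x => insert (v.1, x) (e.erase v) ∈ H)
      simp only [Finset.card_univ, Fintype.card_fin] at hle ⊢
      omega
    have hx : v.2 ∈ (univ.filter (fun x : Fin n => insert (v.1, x) (e.erase v) ∈ H)) := by
      rw [huniv]; exact mem_univ _
    rw [mem_filter] at hx
    have h2 := hx.2
    rwa [Prod.mk.eta, Finset.insert_erase hv] at h2
  -- use the integral perfect matching S_x = {(j,x) : j}
  set Sx : Fin n → Finset (Fin t × Fin n) := fun x => univ.image (fun j : Fin t => (j, x))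
    with hSx
  have hSxinj : Function.Injective Sx := by
    intro x y hxy
    have : ((⟨0, ht⟩ : Fin t), x) ∈ Sx y := by
      rw [← hxy, hSx]; simp
    rw [hSx] at this
    simp only [Finset.mem_image, mem_univ, true_and] at this
    obtain ⟨j, hj⟩ := this
    exact (congrArg Prod.snd hj).symm
  have hSleg : ∀ x, Legal (Sx x) := by
    intro x u hu v hv h1
    simp only [hSx, Finset.mem_image, mem_univ, true_and] at hu hv
    obtain ⟨j, rfl⟩ := hu
    obtain ⟨j', rfl⟩ := hv
    simp only at h1
    rw [h1]
  have hSspan : ∀ x, SpansClique t n k H (Sx x) := by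
    intro x
    refine ⟨?_, hSleg x, ?_⟩
    · rw [hSx]
      rw [Finset.card_image_of_injective _ (fun j j' h => congrArg Prod.fst h)]
      simp
    · intro e he hecard
      exact hAll e (legal_subset (hSleg x) he) hecard
  refine ⟨fun S => if S ∈ univ.image Sx then 1 else 0, ?_, ?_, ?_, ?_⟩
  · intro S
    by_cases h : S ∈ univ.image Sx <;> simp [h]
  · intro S hS
    by_cases h : S ∈ univ.image Sx
    · simp only [Finset.mem_image, mem_univ, true_and] at h
      obtain ⟨x, rfl⟩ := h
      exact hSspan x
    · simp [h] at hS
  · intro v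
    have : ∀ S ∈ univ.filter (fun S => v ∈ S), (if S ∈ univ.image Sx then (1:ℝ) else 0) =
        if S ∈ (univ.image Sx).filter (fun S => v ∈ S) then 1 else 0 := by
      intro S hS
      rw [mem_filter] at hS
      by_cases h : S ∈ univ.image Sx <;> simp [h, hS.2]
    rw [Finset.sum_congr rfl this, Finset.sum_ite_mem]
    have hsub : (univ.filter (fun S => v ∈ S)) ∩ ((univ.image Sx).filter (fun S => v ∈ S)) =
        {Sx v.2} := by
      ext S
      simp only [Finset.mem_inter, mem_filter, mem_univ, true_and, Finset.mem_image,
        Finset.mem_singleton]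
      constructor
      · rintro ⟨hv1, ⟨x, rfl⟩, hv2⟩
        simp only [hSx, Finset.mem_image, mem_univ, true_and] at hv2
        obtain ⟨j, hj⟩ := hv2
        rw [show x = v.2 from congrArg Prod.snd hj]
      · rintro rfl
        refine ⟨?_, ⟨v.2, rfl⟩, ?_⟩ <;>
        · simp only [hSx, Finset.mem_image, mem_univ, true_and]
          exact ⟨v.1, by simp⟩
    rw [hsub]
    simp
  · have : ∀ S : Finset (Fin t × Fin n), (if S ∈ univ.image Sx then (1:ℝ) else 0) =
        if S ∈ univ.image Sx then 1 else 0 := fun _ => rfl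
    rw [Finset.sum_ite_mem, Finset.univ_inter, Finset.sum_const]
    rw [Finset.card_image_of_injective _ hSxinj]
    simp

section Part2
variable {t n : ℕ} (H : Finset (Finset (Fin t × Fin n)))

/-- nonneighbour bound -/
lemma nonnbr_bound (hn : 1 ≤ n) {m : ℕ} (hm : m ≤ n) (hD : CodegGEN t n 2 H (n - m))
    (u : Fin t × Fin n) (j : Fin t) (hj : j ≠ u.1) :
    (univ.filter (fun x : Fin n => {(j, x), u} ∉ H)).card ≤ m := by
  have h1 : Legal ({u} : Finset (Fin t × Fin n)) := by
    intro a ha b hb _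
    simp only [Finset.mem_singleton] at ha hb
    rw [ha, hb]
  have h2 : ∀ v ∈ ({u} : Finset (Fin t × Fin n)), v.1 ≠ j := by
    intro v hv
    simp only [Finset.mem_singleton] at hv
    rw [hv]
    exact fun h => hj h.symm
  have hge := hD {u} (by simp) h1 j h2
  have : (univ.filter (fun x : Fin n => {(j, x), u} ∉ H)) =
      (univ.filter (fun x : Fin n => insert (j, x) {u} ∈ H))ᶜ := by
    ext x
    simp [Finset.mem_compl]
  rw [this, Finset.card_compl]
  simp only [Fintype.card_fin]
  omega

/-- Greedy clique extension lemma. -/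
lemma cliqueExists (hn : 1 ≤ n) {m : ℕ} (hm : m ≤ n) (hD : CodegGEN t n 2 H (n - m))
    (U : Fin t → Finset (Fin n))
    (hU : ∀ J : ℕ, (univ.filter (fun j : Fin t => (U j).card ≤ J * m)).card ≤ J) :
    ∃ x : Fin t → Fin n, (∀ j, x j ∈ U j) ∧
      (∀ j j', j ≠ j' → {(j, x j), (j', x j')} ∈ H) := by
  suffices haux : ∀ s : Finset (Fin t), ∀ x : Fin t → Fin n,
      (∀ j ∈ s, ∀ j' ∉ s, (U j').card ≤ (U j).card) →
      (∀ j ∉ s, x j ∈ U j) →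
      (∀ j ∉ s, ∀ j' ∉ s, j ≠ j' → {(j, x j), (j', x j')} ∈ H) →
      ∃ x' : Fin t → Fin n, (∀ j ∉ s, x' j = x j) ∧ (∀ j, x' j ∈ U j) ∧
        (∀ j j', j ≠ j' → {(j, x' j), (j', x' j')} ∈ H) by
    have h0 : ∀ J : ℕ, 1 ≤ J * m + 1 := fun J => by omega
    obtain ⟨x', _, h2, h3⟩ := haux univ (fun _ => ⟨0, hn⟩)
      (fun j hj j' hj' => absurd (mem_univ j') hj')
      (fun j hj => absurd (mem_univ j) hj)
      (fun j hj => absurd (mem_univ j) hj)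
    exact ⟨x', h2, h3⟩
  intro s
  induction s using Finset.strongInduction with
  | _ s ih =>
    intro x hord hmem hadj
    rcases Finset.eq_empty_or_nonempty s with rfl | hne
    · exact ⟨x, fun j _ => rfl, fun j => hmem j (by simp), fun j j' hjj' =>
        hadj j (by simp) j' (by simp) hjj'⟩
    obtain ⟨j₀, hj₀s, hj₀min⟩ := Finset.exists_min_image s (fun j => (U j).card) hne
    set J := sᶜ.card with hJ
    -- U j₀ is big
    have hbig : J * m + 1 ≤ (U j₀).card := by
      by_contra hsmall
      push_neg at hsmall
      have hsub : insert j₀ sᶜ ⊆ univ.filter (fun j => (U j).card ≤ J * m) := by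
        intro j hj
        rcases Finset.mem_insert.1 hj with rfl | hj
        · simp only [mem_filter, mem_univ, true_and]; omega
        · simp only [mem_filter, mem_univ, true_and]
          have := hord j₀ hj₀s j (Finset.mem_compl.1 hj)
          omega
      have hcard := Finset.card_le_card hsub
      rw [Finset.card_insert_of_notMem (by simp [hj₀s])] at hcard
      have := hU J
      omega
    -- pick a good vertex in U j₀
    set B : Fin t → Finset (Fin n) := fun j' => univ.filter
      (fun x₀ : Fin n => {(j₀, x₀), (j', x j')} ∉ H) with hB
    have hBcard : ∀ j' ∈ sᶜ, (B j').card ≤ m := by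
      intro j' hj'
      apply nonnbr_bound H hn hm hD (j', x j') j₀
      intro h
      simp only at h
      exact (Finset.mem_compl.1 hj') (h ▸ hj₀s)
    have hGood : (U j₀ \ sᶜ.biUnion B).Nonempty := by
      rw [← Finset.card_pos]
      have h1 : (sᶜ.biUnion B).card ≤ J * m := by
        calc (sᶜ.biUnion B).card ≤ ∑ j' ∈ sᶜ, (B j').card := Finset.card_biUnion_le
          _ ≤ ∑ _j' ∈ sᶜ, m := Finset.sum_le_sum hBcard
          _ = J * m := by rw [Finset.sum_const, smul_eq_mul]
      have h2 := Finset.le_card_sdiff (sᶜ.biUnion B) (U j₀)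
      omega
    obtain ⟨x₀, hx₀⟩ := hGood
    rw [Finset.mem_sdiff] at hx₀
    have hx₀U : x₀ ∈ U j₀ := hx₀.1
    have hx₀adj : ∀ j' ∉ s, {(j₀, x₀), (j', x j')} ∈ H := by
      intro j' hj'
      by_contra hcon
      exact hx₀.2 (Finset.mem_biUnion.2 ⟨j', Finset.mem_compl.2 hj', by
        rw [hB]; simp only [mem_filter, mem_univ, true_and]; exact hcon⟩)
    -- recurse
    have hss : s.erase j₀ ⊂ s := Finset.erase_ssubset hj₀s
    have hord' : ∀ j ∈ s.erase j₀, ∀ j' ∉ s.erase j₀, (U j').card ≤ (U j).card := by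
      intro j hj j' hj'
      rcases (Decidable.em (j' ∈ s)) with hj's | hj's
      · have : j' = j₀ := by
          by_contra hcon
          exact hj' (Finset.mem_erase.2 ⟨hcon, hj's⟩)
        rw [this]
        exact hj₀min j (Finset.mem_of_mem_erase hj)
      · exact le_trans (hord j₀ hj₀s j' hj's) (hj₀min j (Finset.mem_of_mem_erase hj))
    have hmem' : ∀ j ∉ s.erase j₀, Function.update x j₀ x₀ j ∈ U j := by
      intro j hj
      rcases Decidable.em (j = j₀) with rfl | hne
      · rw [Function.update_self]; exact hx₀U
      · rw [Function.update_of_ne hne]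
        exact hmem j (fun hjs => hj (Finset.mem_erase.2 ⟨hne, hjs⟩))
    have hadj' : ∀ j ∉ s.erase j₀, ∀ j' ∉ s.erase j₀, j ≠ j' →
        {(j, Function.update x j₀ x₀ j), (j', Function.update x j₀ x₀ j')} ∈ H := by
      intro j hj j' hj' hjj'
      rcases Decidable.em (j = j₀) with rfl | hne
      · rw [Function.update_self, Function.update_of_ne (Ne.symm hjj')]
        exact hx₀adj j' (fun hjs => hj' (Finset.mem_erase.2 ⟨Ne.symm hjj', hjs⟩))
      · rcases Decidable.em (j' = j₀) with rfl | hne'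
        · rw [Function.update_self, Function.update_of_ne hne]
          have := hx₀adj j (fun hjs => hj (Finset.mem_erase.2 ⟨hne, hjs⟩))
          rwa [Finset.pair_comm] at this
        · rw [Function.update_of_ne hne, Function.update_of_ne hne']
          exact hadj j (fun hjs => hj (Finset.mem_erase.2 ⟨hne, hjs⟩))
            j' (fun hjs => hj' (Finset.mem_erase.2 ⟨hne', hjs⟩)) hjj'
    obtain ⟨x', hx'eq, hx'mem, hx'adj⟩ :=
      ih (s.erase j₀) hss (Function.update x j₀ x₀) hord' hmem' hadj'
    refine ⟨x', ?_, hx'mem, hx'adj⟩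
    intro j hj
    have hjne : j ≠ j₀ := fun h => hj (h ▸ hj₀s)
    have : j ∉ s.erase j₀ := fun h => hj (Finset.mem_of_mem_erase h)
    rw [hx'eq j this, Function.update_of_ne hjne]
end Part2

lemma card_filter_val_lt {n a : ℕ} (han : a ≤ n) :
    (univ.filter (fun x : Fin n => (x : ℕ) < a)).card = a := by
  rw [← Finset.card_range a]
  apply Finset.card_bij (fun (x : Fin n) _ => (x : ℕ)) ?_ ?_ ?_
  · intro x hx
    simp only [mem_filter] at hx
    simpa using hx.2
  · intro x _ y _ h; exact Fin.val_injective h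
  · intro b hb
    simp only [Finset.mem_range] at hb
    exact ⟨⟨b, lt_of_lt_of_le hb han⟩, by simp [hb], rfl⟩

lemma rankCount {t n m : ℕ} (htm : t * m ≤ n) (hn : 1 ≤ n) (i : ℕ) (J : ℕ) :
    (univ.filter (fun j : Fin t => (i + (j : ℕ) * m) % n < J * m)).card ≤ J := by
  rcases Nat.eq_zero_or_pos m with rfl | hm
  · simp
  set v : Fin t → ℕ := fun j => (i + (j : ℕ) * m) % n with hv
  have hvlt : ∀ j, v j < n := fun j => Nat.mod_lt _ (by omega)
  -- gap property
  have hgap : ∀ j j' : Fin t, (j : ℕ) < (j' : ℕ) →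
      (v j + m ≤ v j' ∨ v j' + m ≤ v j) := by
    intro j j' hjj'
    have hjt : (j' : ℕ) < t := j'.2
    set δ : ℕ := ((j' : ℕ) - (j : ℕ)) * m with hδ
    have hmul1 : (j : ℕ) * m ≤ (j' : ℕ) * m := Nat.mul_le_mul_right m (le_of_lt hjj')
    have hsub : δ = (j' : ℕ) * m - (j : ℕ) * m := by rw [hδ, Nat.sub_mul]
    have hδ1 : m ≤ δ := by
      rw [hδ]
      calc m = 1 * m := (Nat.one_mul m).symm
      _ ≤ ((j' : ℕ) - (j : ℕ)) * m := Nat.mul_le_mul_right m (by omega)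
    have hδ2 : δ + m ≤ n := by
      have h1 : ((j' : ℕ) - (j : ℕ)) * m ≤ (t - 1) * m :=
        Nat.mul_le_mul_right m (by omega)
      have h2 : (t - 1) * m = t * m - m := by rw [Nat.sub_mul, Nat.one_mul]
      have h3 : m ≤ t * m := by
        calc m = 1 * m := (Nat.one_mul m).symm
        _ ≤ t * m := Nat.mul_le_mul_right m (by omega)
      omega
    have hkey : v j' = (v j + δ) % n := by
      rw [hv]
      simp only
      rw [Nat.mod_add_mod]
      congr 1
      omega
    rcases Nat.lt_or_ge (v j + δ) n with hlt | hge
    · left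
      rw [hkey, Nat.mod_eq_of_lt hlt]
      omega
    · right
      have : (v j + δ) % n = v j + δ - n := by
        rw [Nat.mod_eq_sub_mod hge, Nat.mod_eq_of_lt (by have := hvlt j; omega)]
      rw [hkey, this]
      have := hvlt j
      omega
  apply le_trans (Finset.card_le_card_of_injOn (fun j => v j / m) ?_ ?_) ?_
  · exact Finset.range J
  · intro j hj
    simp only [Finset.mem_coe, mem_filter] at hj
    simp only [Finset.mem_coe, Finset.mem_range]
    exact (Nat.div_lt_iff_lt_mul hm).2 hj.2
  · intro j hj j' hj' hfeq
    simp only at hfeq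
    by_contra hne
    have hvne : (j : ℕ) ≠ (j' : ℕ) := fun h => hne (Fin.ext h)
    have hdiv : ∀ a b : ℕ, a + m ≤ b → a / m < b / m := by
      intro a b hab
      have h1 : (a + m) / m ≤ b / m := Nat.div_le_div_right hab
      rw [Nat.add_div_right a hm] at h1
      omega
    rcases Nat.lt_or_ge (j : ℕ) (j' : ℕ) with h | h
    · rcases hgap j j' h with hg | hg
      · exact absurd hfeq (Nat.ne_of_lt (hdiv _ _ hg))
      · exact absurd hfeq (Nat.ne_of_gt (hdiv _ _ hg))
    · have h' : (j' : ℕ) < (j : ℕ) := by omega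
      rcases hgap j' j h' with hg | hg
      · exact absurd hfeq (Nat.ne_of_gt (hdiv _ _ hg))
      · exact absurd hfeq (Nat.ne_of_lt (hdiv _ _ hg))
  · rw [Finset.card_range]

lemma coverBound {t n : ℕ} (H : Finset (Finset (Fin t × Fin n))) (hn : 1 ≤ n) (ht : 1 ≤ t)
    (hD : CodegGEN t n 2 H (n - n / t))
    (y : Fin t × Fin n → ℝ)
    (hy : ∀ x : Fin t → Fin n, (∀ j j', j ≠ j' → {(j, x j), (j', x j')} ∈ H) →
      0 ≤ ∑ j : Fin t, y (j, x j)) :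
    0 ≤ ∑ v : Fin t × Fin n, y v := by
  haveI : NeZero n := ⟨by omega⟩
  set m : ℕ := n / t with hm
  have htm : t * m ≤ n := by
    rw [hm, Nat.mul_comm]
    exact Nat.div_mul_le_self n t
  have hmn : m ≤ n := Nat.div_le_self n t
  set σ : Fin t → Equiv.Perm (Fin n) := fun j => Tuple.sort (fun x => y (j, x)) with hσ
  set c : Fin t → Fin n → ℝ := fun j r => y (j, σ j r) with hc
  have hmono : ∀ j, Monotone (c j) := fun j => Tuple.monotone_sort (fun x => y (j, x))
  set ρ : Fin n → Fin t → Fin n :=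
    fun i j => ⟨((i : ℕ) + (j : ℕ) * m) % n, Nat.mod_lt _ (by omega)⟩ with hρ
  -- the per-pattern cliques
  have hperi : ∀ i : Fin n, 0 ≤ ∑ j : Fin t, c j (ρ i j) := by
    intro i
    set U : Fin t → Finset (Fin n) :=
      fun j => (univ.filter (fun r : Fin n => r ≤ ρ i j)).image (σ j) with hU
    have hUcard : ∀ j, (U j).card = (ρ i j : ℕ) + 1 := by
      intro j
      rw [hU]
      simp only
      rw [Finset.card_image_of_injective _ (σ j).injective]
      have : (univ.filter (fun r : Fin n => r ≤ ρ i j)) =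
          (univ.filter (fun r : Fin n => (r : ℕ) < (ρ i j : ℕ) + 1)) := by
        apply filter_congr
        intro r _
        rw [Fin.le_def]; omega
      rw [this, card_filter_val_lt (by have := (ρ i j).2; omega)]
    have hUhyp : ∀ J : ℕ, (univ.filter (fun j : Fin t => (U j).card ≤ J * m)).card ≤ J := by
      intro J
      have heq : (univ.filter (fun j : Fin t => (U j).card ≤ J * m)) =
          (univ.filter (fun j : Fin t => ((i : ℕ) + (j : ℕ) * m) % n < J * m)) := by
        apply filter_congr
        intro j _
        rw [hUcard j]
        have : (ρ i j : ℕ) = ((i : ℕ) + (j : ℕ) * m) % n := rfl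
        rw [this]
        omega
      rw [heq]
      exact rankCount htm hn (i : ℕ) J
    obtain ⟨x, hxU, hxadj⟩ := cliqueExists H hn hmn hD U hUhyp
    have hkey : ∀ j, y (j, x j) ≤ c j (ρ i j) := by
      intro j
      have := hxU j
      rw [hU] at this
      simp only [Finset.mem_image, mem_filter, mem_univ, true_and] at this
      obtain ⟨r, hr, hrx⟩ := this
      calc y (j, x j) = c j r := by rw [hc]; simp only; rw [hrx]
      _ ≤ c j (ρ i j) := hmono j hr
    exact le_trans (hy x hxadj) (Finset.sum_le_sum (fun j _ => hkey j))
  -- summing up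
  have hswap : ∑ v : Fin t × Fin n, y v = ∑ i : Fin n, ∑ j : Fin t, c j (ρ i j) := by
    rw [Finset.sum_comm]
    rw [Fintype.sum_prod_type]
    apply Finset.sum_congr rfl
    intro j _
    -- ∑ x, y (j, x) = ∑ i, c j (ρ i j)
    have h1 : ∑ x : Fin n, y (j, x) = ∑ r : Fin n, c j r := by
      rw [hc]
      simp only
      exact (Equiv.sum_comp (σ j) (fun x => y (j, x))).symm
    have hb : ∀ i : Fin n, ρ i j = i + (⟨(j : ℕ) * m % n, Nat.mod_lt _ (by omega)⟩ : Fin n) := by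
      intro i
      apply Fin.ext
      rw [hρ]
      simp only [Fin.add_def]
      rw [Nat.add_mod_mod]
    have h2 : ∑ i : Fin n, c j (ρ i j) = ∑ r : Fin n, c j r := by
      rw [Finset.sum_congr rfl (fun i _ => by rw [hb i])]
      exact Equiv.sum_comp (Equiv.addRight (⟨(j : ℕ) * m % n, Nat.mod_lt _ (by omega)⟩ : Fin n)) (fun r => c j r)
    rw [h1, h2]
  rw [hswap]
  exact Finset.sum_nonneg (fun i _ => hperi i)


lemma spans_of_transversal {t n : ℕ} (H : Finset (Finset (Fin t × Fin n)))
    (x : Fin t → Fin n) (hadj : ∀ j j', j ≠ j' → {(j, x j), (j', x j')} ∈ H) :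
    SpansClique t n 2 H (univ.image (fun j => (j, x j))) := by
  have hinj : Function.Injective (fun j : Fin t => (j, x j)) :=
    fun j j' h => congrArg Prod.fst h
  refine ⟨?_, ?_, ?_⟩
  · rw [Finset.card_image_of_injective _ hinj]; simp
  · intro u hu v hv h1
    simp only [Finset.mem_image, mem_univ, true_and] at hu hv
    obtain ⟨j, rfl⟩ := hu
    obtain ⟨j', rfl⟩ := hv
    simp only at h1
    rw [h1]
  · intro e he hecard
    obtain ⟨a, b, hab, rfl⟩ := Finset.card_eq_two.1 hecard
    have ha := he (Finset.mem_insert_self _ _)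
    have hb := he (Finset.mem_insert_of_mem (Finset.mem_singleton_self _))
    simp only [Finset.mem_image, mem_univ, true_and] at ha hb
    obtain ⟨j, rfl⟩ := ha
    obtain ⟨j', rfl⟩ := hb
    exact hadj j j' (fun h => hab (by rw [h]))

lemma exists_pfm {t n : ℕ} (H : Finset (Finset (Fin t × Fin n))) (ht : 1 ≤ t) (hn : 1 ≤ n)
    (hD : CodegGEN t n 2 H (n - n / t)) :
    ∃ w, IsPerfectFracMatching t n 2 H w := by
  set ι := {S : Finset (Fin t × Fin n) // SpansClique t n 2 H S} with hι
  set L : (ι → ℝ) →ₗ[ℝ] ((Fin t × Fin n) → ℝ) :=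
    { toFun := fun lam v => ∑ S : ι, lam S * (if v ∈ S.1 then 1 else 0),
      map_add' := by
        intro a b; funext v
        simp only [Pi.add_apply, add_mul]
        exact Finset.sum_add_distrib,
      map_smul' := by
        intro r a; funext v
        simp only [Pi.smul_apply, smul_eq_mul, RingHom.id_apply, mul_assoc]
        exact (Finset.mul_sum _ _ _).symm } with hL
  set M : Set (ι → ℝ) := {lam | (∀ S, 0 ≤ lam S) ∧ ∑ S : ι, lam S = (n : ℝ)} with hM
  have hMconv : Convex ℝ M := by
    intro a ha b hb p q hp hq hpq
    refine ⟨fun S => add_nonneg (mul_nonneg hp (ha.1 S)) (mul_nonneg hq (hb.1 S)), ?_⟩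
    simp only [Pi.add_apply, Pi.smul_apply, smul_eq_mul]
    rw [Finset.sum_add_distrib, ← Finset.mul_sum, ← Finset.mul_sum, ha.2, hb.2]
    nlinarith [hpq]
  have hMcomp : IsCompact M := by
    have himg : M = (fun μ : ι → ℝ => (n : ℝ) • μ) '' stdSimplex ℝ ι := by
      ext lam
      constructor
      · intro hlam
        refine ⟨(n : ℝ)⁻¹ • lam, ⟨fun S => ?_, ?_⟩, ?_⟩
        · exact mul_nonneg (by positivity) (hlam.1 S)
        · simp only [Pi.smul_apply, smul_eq_mul]
          rw [← Finset.mul_sum, hlam.2]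
          field_simp
        · have hn0 : (n:ℝ) ≠ 0 := by positivity
          show (n:ℝ) • ((n:ℝ)⁻¹ • lam) = lam
          rw [smul_smul, mul_inv_cancel₀ hn0, one_smul]
      · rintro ⟨μ, hμ, rfl⟩
        refine ⟨fun S => mul_nonneg (by positivity) (hμ.1 S), ?_⟩
        simp only [Pi.smul_apply, smul_eq_mul]
        rw [← Finset.mul_sum, hμ.2, mul_one]
    rw [himg]
    exact (isCompact_stdSimplex ℝ ι).image (continuous_const_smul _)
  set K : Set ((Fin t × Fin n) → ℝ) := L '' M with hK
  have hKcomp : IsCompact K := hMcomp.image L.continuous_of_finiteDimensional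
  have hKconv : Convex ℝ K := hMconv.linear_image L
  by_cases hone : (fun _ => (1 : ℝ)) ∈ K
  · obtain ⟨lam, hlamM, hlam⟩ := hone
    set w : Finset (Fin t × Fin n) → ℝ :=
      fun S => if h : SpansClique t n 2 H S then lam ⟨S, h⟩ else 0 with hw
    have hwnn : ∀ S, 0 ≤ w S := by
      intro S
      simp only [hw]
      by_cases h : SpansClique t n 2 H S
      · rw [dif_pos h]; exact hlamM.1 _
      · rw [dif_neg h]
    have hsubty : ∀ g : Finset (Fin t × Fin n) → ℝ, (∀ S, ¬ SpansClique t n 2 H S → g S = 0) →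
        ∑ S : Finset (Fin t × Fin n), g S = ∑ S : ι, g S.1 := by
      intro g hg
      rw [← Finset.sum_filter_add_sum_filter_not univ (fun S => SpansClique t n 2 H S) g]
      have h2 : ∑ S ∈ univ.filter (fun S => ¬ SpansClique t n 2 H S), g S = 0 :=
        Finset.sum_eq_zero (fun S hS => hg S (mem_filter.1 hS).2)
      rw [h2, add_zero]
      exact Finset.sum_subtype _ (by intro x; simp) g
    have hweq : ∀ S : ι, w S.1 = lam S := by
      intro S
      simp only [hw]
      rw [dif_pos S.2]
    have hcov : ∀ v : Fin t × Fin n, ∑ S ∈ univ.filter (fun S => v ∈ S), w S = 1 := by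
      intro v
      have h1 : ∑ S ∈ univ.filter (fun S => v ∈ S), w S
          = ∑ S : Finset (Fin t × Fin n), (if v ∈ S then w S else 0) := by
        rw [Finset.sum_filter]
      have h2 : ∑ S : Finset (Fin t × Fin n), (if v ∈ S then w S else 0)
          = ∑ S : ι, (if v ∈ S.1 then w S.1 else 0) := by
        apply hsubty
        intro S hS
        simp only [hw]
        rw [dif_neg hS, ite_self]
      have h3 : ∀ S : ι, (if v ∈ S.1 then w S.1 else 0) = lam S * (if v ∈ S.1 then 1 else 0) := by
        intro S
        rw [hweq S]
        by_cases h : v ∈ S.1 <;> simp [h]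
      have h4 := congrFun hlam v
      rw [hL] at h4
      simp only [LinearMap.coe_mk, AddHom.coe_mk] at h4
      rw [h1, h2, Finset.sum_congr rfl (fun S _ => h3 S), h4]
    refine ⟨w, ?_, ?_, ?_, ?_⟩
    · intro S
      refine ⟨hwnn S, ?_⟩
      by_cases h : SpansClique t n 2 H S
      · have hne : S.Nonempty := Finset.card_pos.1 (by rw [h.1]; omega)
        obtain ⟨v, hv⟩ := hne
        have hle : w S ≤ ∑ S' ∈ univ.filter (fun S' => v ∈ S'), w S' :=
          Finset.single_le_sum (fun S' _ => hwnn S') (by simp [hv])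
        rw [hcov v] at hle
        exact hle
      · simp only [hw]; rw [dif_neg h]; norm_num
    · intro S hS
      by_contra h
      exact hS (by simp only [hw]; rw [dif_neg h])
    · intro v; rw [hcov v]
    · have he1 : ∑ S : Finset (Fin t × Fin n), w S = ∑ S : ι, w S.1 :=
        hsubty w (fun S hS => by simp only [hw]; rw [dif_neg hS])
      rw [he1, Finset.sum_congr rfl (fun S _ => hweq S)]
      exact hlamM.2
  · exfalso
    obtain ⟨f, u, hfu, huf⟩ := geometric_hahn_banach_closed_point hKconv hKcomp.isClosed hone
    set δ : (Fin t × Fin n) → ((Fin t × Fin n) → ℝ) := fun v => (fun v' => if v = v' then 1 else 0) with hδ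
    set y : (Fin t × Fin n) → ℝ := fun v => u / ((t : ℝ) * n) - f (δ v) with hy
    have htn : (0:ℝ) < (t : ℝ) * n := by positivity
    -- lower bound on clique sums
    have hcl : ∀ x : Fin t → Fin n, (∀ j j', j ≠ j' → {(j, x j), (j', x j')} ∈ H) →
        0 ≤ ∑ j : Fin t, y (j, x j) := by
      intro x hadj
      have hS := spans_of_transversal H x hadj
      set S : Finset (Fin t × Fin n) := univ.image (fun j => (j, x j)) with hSdef
      -- n•χ_S ∈ K
      set lam : ι → ℝ := fun S' => if S' = ⟨S, hS⟩ then (n : ℝ) else 0 with hlam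
      have hlamM : lam ∈ M := by
        refine ⟨fun S' => ?_, ?_⟩
        · rw [hlam]; by_cases h : S' = ⟨S, hS⟩ <;> simp [h]
        · rw [hlam, Finset.sum_ite_eq' univ (⟨S, hS⟩ : ι) (fun _ => (n:ℝ))]
          simp
      have hLlam : L lam = fun v => (n : ℝ) * (if v ∈ S then 1 else 0) := by
        funext v
        rw [hL]
        simp only [LinearMap.coe_mk, AddHom.coe_mk]
        have hterm : ∀ S' : ι, lam S' * (if v ∈ S'.1 then (1:ℝ) else 0)
            = if S' = ⟨S, hS⟩ then (n:ℝ) * (if v ∈ S'.1 then 1 else 0) else 0 := by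
          intro S'
          rw [hlam]
          simp only
          rw [ite_mul, zero_mul]
        rw [Finset.sum_congr rfl (fun S' _ => hterm S')]
        rw [Finset.sum_ite_eq' univ (⟨S, hS⟩ : ι)]
        simp
      have hfS : f (L lam) < u := hfu _ ⟨lam, hlamM, rfl⟩
      -- χ_S = ∑ v ∈ S, δ v
      have hchi : (fun v => if v ∈ S then (1:ℝ) else 0) = ∑ v ∈ S, δ v := by
        funext v'
        rw [Finset.sum_apply]
        rw [hδ]
        simp only
        rw [Finset.sum_ite_eq' S v' (fun _ => (1:ℝ))]
      have hLsmul : L lam = (n : ℝ) • (fun v => if v ∈ S then (1:ℝ) else 0) := by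
        rw [hLlam]; funext v; simp
      have hfchi : (n : ℝ) * f (fun v => if v ∈ S then (1:ℝ) else 0) < u := by
        rw [hLsmul] at hfS
        rwa [map_smul, smul_eq_mul] at hfS
      have hfsum : f (fun v => if v ∈ S then (1:ℝ) else 0) = ∑ j : Fin t, f (δ (j, x j)) := by
        rw [hchi, map_sum]
        rw [hSdef, Finset.sum_image (fun j _ j' _ h => congrArg Prod.fst h)]
      have hsum : ∑ j : Fin t, y (j, x j) =
          (t : ℝ) * (u / ((t : ℝ) * n)) - ∑ j : Fin t, f (δ (j, x j)) := by
        rw [hy]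
        rw [Finset.sum_sub_distrib, Finset.sum_const, Finset.card_univ]
        simp [nsmul_eq_mul]
      rw [hsum, ← hfsum]
      have hteq : (t : ℝ) * (u / ((t : ℝ) * n)) = u / n := by
        field_simp
      rw [hteq]
      have hn0 : (0:ℝ) < (n:ℝ) := by positivity
      rw [sub_nonneg]
      calc f (fun v => if v ∈ S then (1:ℝ) else 0) ≤ u / n := by
            rw [le_div_iff₀ hn0]
            nlinarith [hfchi]
      _ = u / n := rfl
    have hcb := coverBound H hn ht hD y hcl
    -- but total is negative
    have htotal : ∑ v : (Fin t × Fin n), y v = u - f (fun _ => (1:ℝ)) := by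
      rw [hy]
      rw [Finset.sum_sub_distrib, Finset.sum_const, Finset.card_univ]
      have hcard : (Fintype.card (Fin t × Fin n) : ℝ) = (t : ℝ) * n := by
        simp [Fintype.card_prod]
      have hone' : (fun _ => (1:ℝ)) = ∑ v : (Fin t × Fin n), δ v := by
        funext v'
        rw [Finset.sum_apply, hδ]
        simp only
        rw [Finset.sum_ite_eq' univ v' (fun _ => (1:ℝ))]
        simp
      rw [hone', map_sum, nsmul_eq_mul, hcard]
      field_simp
    rw [htotal] at hcb
    linarith [huf]


/-- Theorem 1.5 (lower bound, and exact value for `k = 2`):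
`φ^{*,k}(t,n) ≥ ⌈(t-k+1)n/t⌉`, with equality `φ^{*,2}(t,n) = ⌈(t-1)n/t⌉` for `k = 2`. -/
theorem stmt18 (t k n : ℕ) (hk : 2 ≤ k) (hkt : k ≤ t) (hn : 1 ≤ n) :
    ⌈(((t : ℚ) - k + 1) * n) / t⌉ ≤ (phiStar t k n : ℤ) ∧
    (k = 2 → (phiStar t k n : ℤ) = ⌈(((t : ℚ) - 1) * n) / t⌉) := by
  have ht : 0 < t := by omega
  have hqlt : (k-1)*n/t < n := by
    rw [Nat.div_lt_iff_lt_mul ht]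
    calc (k-1)*n < t*n := by
          apply Nat.mul_lt_mul_of_lt_of_le (by omega) (le_refl n) (by omega)
    _ = n * t := Nat.mul_comm _ _
  have hPmono : ∀ d d' : ℕ, d ≤ d' →
      (∀ H : Finset (Finset (Fin t × Fin n)), IsPartiteKGraph t n k H →
        CodegGEN t n k H d → ∃ w, IsPerfectFracMatching t n k H w) →
      (∀ H : Finset (Finset (Fin t × Fin n)), IsPartiteKGraph t n k H →
        CodegGEN t n k H d' → ∃ w, IsPerfectFracMatching t n k H w) := by
    intro d d' hdd hd H hPart hCod
    exact hd H hPart (fun T h1 h2 j h3 => le_trans hdd (hCod T h1 h2 j h3))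
  have hPne : n ∈ {d : ℕ | ∀ H : Finset (Finset (Fin t × Fin n)), IsPartiteKGraph t n k H →
      CodegGEN t n k H d → ∃ w, IsPerfectFracMatching t n k H w} :=
    fun H h1 h2 => n_mem t k n hk hkt hn H h1 h2
  have hlb : n - (k-1)*n/t ≤ phiStar t k n := by
    apply le_csInf ⟨n, hPne⟩
    intro x hx
    by_contra hcon
    push_neg at hcon
    have hxle : x ≤ n - ((k-1)*n/t + 1) := by omega
    exact lowerConstruction t k n hk hkt hn (hPmono x _ hxle hx)
  constructor
  · rw [ceilEq t k n hk hkt]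
    have h1 : ((n - (k-1)*n/t : ℕ) : ℤ) ≤ (phiStar t k n : ℤ) := by exact_mod_cast hlb
    omega
  · rintro rfl
    have hub : phiStar t 2 n ≤ n - n/t := by
      apply Nat.sInf_le
      intro H _ h2
      exact exists_pfm H (by omega) hn h2
    have hlow : n - n/t ≤ phiStar t 2 n := by
      have h21 : (2-1)*n/t = n/t := by norm_num
      rw [← h21]
      exact hlb
    have heq : phiStar t 2 n = n - n/t := le_antisymm hub hlow
    have hc2 := ceilEq t 2 n (le_refl 2) hkt
    rw [show ((t:ℚ) - ((2:ℕ):ℚ) + 1) = (t:ℚ) - 1 by push_cast; ring] at hc2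
    rw [show (2-1)*n/t = n/t by norm_num] at hc2
    rw [hc2, heq]
    have hdle : n/t ≤ n := Nat.div_le_self n t
    omega
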